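/- Let ℂ[X] be the polynomial ring in one variable over ℂ and let A = Algebra.adjoin ℂ {X³, X⁴, X⁵} be the ℂ-subalgebra generated by X³, X⁴ and X⁵. Then the set {f ∈ ℂ[X] : f·g ∈ A for every g ∈ ℂ[X]} equals the set of polynomials divisible by X³; moreover dim_ℂ (ℂ[X]/X³ℂ[X]) = 3, which is not equal to 2 · dim_ℂ (ℂ[X]/A) = 4, where ℂ[X]/A denotes the quotient of ℂ[X] by the underlying ℂ-subspace of A. -/

import Mathlib

open Polynomial

noncomputable def Scond : Subalgebra ℂ (Polynomial ℂ) where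
  carrier := {p | p.coeff 1 = 0 ∧ p.coeff 2 = 0}
  add_mem' := by
    rintro a b ⟨ha1, ha2⟩ ⟨hb1, hb2⟩
    simp_all
  mul_mem' := by
    rintro a b ⟨ha1, ha2⟩ ⟨hb1, hb2⟩
    constructor <;>
    · show (a * b).coeff _ = 0
      rw [coeff_mul, Finset.Nat.sum_antidiagonal_eq_sum_range_succ_mk]
      simp [Finset.sum_range_succ, ha1, ha2, hb1, hb2]
  algebraMap_mem' := by
    intro r
    constructor <;> simp [coeff_C]

lemma pow_mem_adjoin (n : ℕ) (h1 : n ≠ 1) (h2 : n ≠ 2) :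
    (X : Polynomial ℂ) ^ n ∈ Algebra.adjoin ℂ ({X ^ 3, X ^ 4, X ^ 5} : Set (Polynomial ℂ)) := by
  induction n using Nat.strong_induction_on with
  | _ n ih =>
    match n, h1, h2 with
    | 0, _, _ => simpa using one_mem _
    | 3, _, _ => exact Algebra.subset_adjoin (by simp)
    | 4, _, _ => exact Algebra.subset_adjoin (by simp)
    | 5, _, _ => exact Algebra.subset_adjoin (by simp)
    | (n+6), _, _ =>
      have h : (X : Polynomial ℂ) ^ (n+6) = X ^ 3 * X ^ (n+3) := by ring
      rw [h]
      exact mul_mem (Algebra.subset_adjoin (by simp)) (ih (n+3) (by omega) (by omega) (by omega))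

lemma mem_adjoin_iff (p : Polynomial ℂ) :
    p ∈ Algebra.adjoin ℂ ({X ^ 3, X ^ 4, X ^ 5} : Set (Polynomial ℂ)) ↔
      p.coeff 1 = 0 ∧ p.coeff 2 = 0 := by
  constructor
  · intro hp
    have : Algebra.adjoin ℂ ({X ^ 3, X ^ 4, X ^ 5} : Set (Polynomial ℂ)) ≤ Scond := by
      rw [Algebra.adjoin_le_iff]
      rintro q (rfl | rfl | rfl) <;> constructor <;> simp [coeff_X_pow, Scond]
    exact this hp
  · rintro ⟨h1, h2⟩
    rw [p.as_sum_support_C_mul_X_pow]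
    refine Subalgebra.sum_mem _ fun n hn => ?_
    have hn1 : n ≠ 1 := fun h => by simp [h, mem_support_iff, h1] at hn
    have hn2 : n ≠ 2 := fun h => by simp [h, mem_support_iff, h2] at hn
    exact mul_mem (Subalgebra.algebraMap_mem _ (p.coeff n)) (pow_mem_adjoin n hn1 hn2)

lemma finrank_quot_X3 :
    Module.finrank ℂ (Polynomial ℂ ⧸ Ideal.span ({X ^ 3} : Set (Polynomial ℂ))) = 3 := by
  have h : (X ^ 3 : Polynomial ℂ) ≠ 0 := pow_ne_zero _ X_ne_zero
  have := (AdjoinRoot.powerBasis h).finrank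
  simp [AdjoinRoot.powerBasis] at this
  exact this

noncomputable def coeff12 : Polynomial ℂ →ₗ[ℂ] ℂ × ℂ :=
  (lcoeff ℂ 1).prod (lcoeff ℂ 2)

lemma coeff12_surj : Function.Surjective coeff12 := by
  rintro ⟨a, b⟩
  refine ⟨C a * X + C b * X ^ 2, ?_⟩
  have h1 : coeff12 (C a * X + C b * X ^ 2) =
      ((C a * X + C b * X ^ 2).coeff 1, (C a * X + C b * X ^ 2).coeff 2) := rfl
  rw [h1, Prod.mk.injEq]
  constructor <;>
  · rw [coeff_add, coeff_C_mul, coeff_C_mul, coeff_X_pow, coeff_X]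
    norm_num

lemma ker_coeff12 :
    LinearMap.ker coeff12 =
      Subalgebra.toSubmodule (Algebra.adjoin ℂ ({X ^ 3, X ^ 4, X ^ 5} : Set (Polynomial ℂ))) := by
  ext p
  simp [coeff12, LinearMap.mem_ker, Prod.ext_iff, mem_adjoin_iff]

lemma finrank_quot_A :
    Module.finrank ℂ
        (Polynomial ℂ ⧸
          Subalgebra.toSubmodule
            (Algebra.adjoin ℂ ({X ^ 3, X ^ 4, X ^ 5} : Set (Polynomial ℂ)))) = 2 := by
  rw [← ker_coeff12]
  rw [(LinearMap.quotKerEquivOfSurjective coeff12 coeff12_surj).finrank_eq,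
    Module.finrank_prod, Module.finrank_self]

theorem monomial_curve_not_gorenstein :
    {f : Polynomial ℂ |
        ∀ g : Polynomial ℂ,
          f * g ∈ Algebra.adjoin ℂ ({X ^ 3, X ^ 4, X ^ 5} : Set (Polynomial ℂ))} =
      {f : Polynomial ℂ | X ^ 3 ∣ f} ∧
    Module.finrank ℂ (Polynomial ℂ ⧸ Ideal.span ({X ^ 3} : Set (Polynomial ℂ))) = 3 ∧
    2 * Module.finrank ℂ
        (Polynomial ℂ ⧸
          Subalgebra.toSubmodule
            (Algebra.adjoin ℂ ({X ^ 3, X ^ 4, X ^ 5} : Set (Polynomial ℂ)))) = 4 ∧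
    Module.finrank ℂ (Polynomial ℂ ⧸ Ideal.span ({X ^ 3} : Set (Polynomial ℂ))) ≠
      2 * Module.finrank ℂ
        (Polynomial ℂ ⧸
          Subalgebra.toSubmodule
            (Algebra.adjoin ℂ ({X ^ 3, X ^ 4, X ^ 5} : Set (Polynomial ℂ)))) := by
  refine ⟨?_, finrank_quot_X3, by rw [finrank_quot_A], by rw [finrank_quot_A, finrank_quot_X3]; norm_num⟩
  ext f
  simp only [Set.mem_setOf_eq]
  constructor
  · intro h
    rw [X_pow_dvd_iff]
    intro d hd
    have h0 : f.coeff 0 = 0 := by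
      have := ((mem_adjoin_iff (f * X ^ 2)).1 (h (X ^ 2))).2
      rwa [show (2 : ℕ) = 0 + 2 by rfl, coeff_mul_X_pow] at this
    have h12 := (mem_adjoin_iff f).1 (by simpa using h 1)
    interval_cases d
    · exact h0
    · exact h12.1
    · exact h12.2
  · intro hdvd g
    rw [mem_adjoin_iff]
    have h3 : (X : Polynomial ℂ) ^ 3 ∣ f * g := hdvd.mul_right g
    rw [X_pow_dvd_iff] at h3
    exact ⟨h3 1 (by norm_num), h3 2 (by norm_num)⟩
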